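/- Let X be a compact metric space. If for every ε > 0 there exists a connected component of X of diameter less than ε which is not a singleton, then for every ε > 0 there exists a continuous non-surjective map f : X → X with sup_{x∈X} d(f(x), x) < ε. -/

import Mathlib

open Set Metric Topology

lemma exists_isClopen_superset_of_connectedComponent {X : Type*} [TopologicalSpace X]
    [T2Space X] [CompactSpace X] {x : X} {U : Set X} (hU : IsOpen U)
    (hKU : connectedComponent x ⊆ U) :
    ∃ V : Set X, IsClopen V ∧ connectedComponent x ⊆ V ∧ V ⊆ U := by
  let N := { s : Set X // IsClopen s ∧ x ∈ s }
  haveI : Nonempty N := ⟨⟨univ, isClopen_univ, mem_univ x⟩⟩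
  have hNcl : ∀ s : N, IsClosed s.val := fun s => s.property.1.1
  have hdir : Directed (· ⊇ ·) fun s : N => s.val := by
    rintro ⟨s, hs, hxs⟩ ⟨t, ht, hxt⟩
    exact ⟨⟨s ∩ t, hs.inter ht, ⟨hxs, hxt⟩⟩, inter_subset_left, inter_subset_right⟩
  have h_nhd : ∀ y ∈ ⋂ s : N, s.val, U ∈ 𝓝 y := by
    intro y hy
    have : y ∈ connectedComponent x := by
      rw [connectedComponent_eq_iInter_isClopen]
      exact hy
    exact hU.mem_nhds (hKU this)
  obtain ⟨s, hsU⟩ := exists_subset_nhds_of_compactSpace hdir hNcl h_nhd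
  exact ⟨s.val, s.property.1,
    connectedComponent_subset_iInter_isClopen.trans (iInter_subset _ s), hsU⟩

/-- If a compact metric space has, for every `ε > 0`, a connected component of diameter
less than `ε` which is not a singleton, then for every `ε > 0` there is a continuous
non-surjective self-map moving every point by less than `ε`. -/
theorem stmt_7 {X : Type*} [MetricSpace X] [CompactSpace X]
    (h : ∀ ε > (0 : ℝ), ∃ x : X, Metric.diam (connectedComponent x) < ε ∧
      ¬ (connectedComponent x).Subsingleton) :
    ∀ ε > (0 : ℝ), ∃ f : X → X, Continuous f ∧ ¬ Function.Surjective f ∧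
      ∀ x : X, dist (f x) x < ε := by
  classical
  intro ε hε
  obtain ⟨x, hdiam, hns⟩ := h ε hε
  set K := connectedComponent x with hK
  set r : ℝ := (ε - diam K) / 2 with hr
  have hr0 : 0 < r := by
    have := hdiam; simp only [hr]; linarith
  -- the open thickening of K
  have hKU : K ⊆ thickening r K := self_subset_thickening hr0 K
  obtain ⟨V, hV, hKV, hVU⟩ :=
    exists_isClopen_superset_of_connectedComponent (x := x) isOpen_thickening hKU
  -- the collapse map
  refine ⟨fun z => if z ∈ V then x else z, ?_, ?_, ?_⟩
  · have : (fun z => if z ∈ V then x else z) = V.piecewise (fun _ => x) id := rfl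
    rw [this]
    apply continuous_const.piecewise _ continuous_id
    simp [hV.frontier_eq]
  · intro hsurj
    obtain ⟨y, hyK, hyx⟩ : ∃ y ∈ K, y ≠ x := by
      by_contra hcon
      push_neg at hcon
      exact hns fun a ha b hb => (hcon a ha).trans (hcon b hb).symm
    obtain ⟨z, hz⟩ := hsurj y
    by_cases hzV : z ∈ V
    · simp only [hzV, if_pos] at hz; exact hyx hz.symm
    · simp only [hzV, if_neg, not_false_iff] at hz
      exact hzV (hz ▸ hKV hyK)
  · intro z
    by_cases hzV : z ∈ V
    · simp only [hzV, if_pos]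
      obtain ⟨y, hyK, hyz⟩ := mem_thickening_iff.mp (hVU hzV)
      have hxy : dist x y ≤ diam K := dist_le_diam_of_mem isBounded_of_compactSpace
        (mem_connectedComponent) hyK
      calc dist x z ≤ dist x y + dist y z := dist_triangle _ _ _
        _ < diam K + r := by rw [dist_comm y z]; linarith
        _ < ε := by simp only [hr]; linarith
    · simp [hzV, hε]
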